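/- Dual rounding sandwich (second half of the paper's Theorem relating maxq, fevc, ν, ν°): under the conic assumptions, suppose α > 0 is such that for every Y ∈ A with diag(Y) = 1 there exists a probability vector p ∈ R_+^{F(A)} (i.e., ∑_{U∈F(A)} p_U = 1) with ∑_{U∈F(A)} p_U s_U s_Uᵀ − αY ∈ lift. Then for every Z ∈ K*, ν°(Z) ≤ fevc(Z) ≤ (1/α)·ν°(Z). -/

import Mathlib

open Matrix Finset

noncomputable section

/-- The trace inner product `⟨X,Y⟩ = tr(XY)` on symmetric matrices. -/
def ip {n : ℕ} (X Y : Matrix (Fin n) (Fin n) ℝ) : ℝ := (X * Y).trace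

/-- The signed incidence vector `s_U ∈ {±1}ⁿ` of `U ⊆ [n]`. -/
def sgn {n : ℕ} (U : Finset (Fin n)) : Fin n → ℝ := fun i => if i ∈ U then 1 else -1

/-- The rank-one sign matrix `s_U s_Uᵀ`. -/
def stensor {n : ℕ} (U : Finset (Fin n)) : Matrix (Fin n) (Fin n) ℝ :=
  fun i j => sgn U i * sgn U j

/-- The quadratic form `vᵀ W v`. -/
def qform {n : ℕ} (W : Matrix (Fin n) (Fin n) ℝ) (v : Fin n → ℝ) : ℝ :=
  ∑ i, ∑ j, v i * W i j * v j

/-- The dual cone (within the space `Sym(n)` of symmetric matrices) of a set `S ⊆ Sym(n)`. -/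
def dualSet {n : ℕ} (S : Set (Matrix (Fin n) (Fin n) ℝ)) : Set (Matrix (Fin n) (Fin n) ℝ) :=
  {X | X.IsSymm ∧ ∀ Y ∈ S, 0 ≤ ip X Y}

/-- The data of the conic framework: closed convex cones `A`, `K̂` of symmetric matrices,
and a linear map `L`. -/
structure ConicSetting (n k : ℕ) where
  A : Set (Matrix (Fin n) (Fin n) ℝ)
  Khat : Set (Matrix (Fin n) (Fin n) ℝ)
  L : Matrix (Fin n) (Fin n) ℝ →ₗ[ℝ] (Fin k → ℝ)
  A_symm : ∀ X ∈ A, X.IsSymm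
  A_closed : IsClosed A
  A_smul : ∀ c : ℝ, 0 ≤ c → ∀ X ∈ A, c • X ∈ A
  A_add : ∀ X ∈ A, ∀ Y ∈ A, X + Y ∈ A
  Khat_symm : ∀ X ∈ Khat, X.IsSymm
  Khat_closed : IsClosed Khat
  Khat_smul : ∀ c : ℝ, 0 ≤ c → ∀ X ∈ Khat, c • X ∈ Khat
  Khat_add : ∀ X ∈ Khat, ∀ Y ∈ Khat, X + Y ∈ Khat

namespace ConicSetting

variable {n k : ℕ} (S : ConicSetting n k)

/-- `K := K̂ ∩ ker L`. -/
def K : Set (Matrix (Fin n) (Fin n) ℝ) := {X | X ∈ S.Khat ∧ S.L X = 0}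

/-- `F(A) := {U ⊆ [n] : s_U s_Uᵀ ∈ A}`. -/
def FA : Set (Finset (Fin n)) := {U | stensor U ∈ S.A}

/-- The range of the adjoint of `L` restricted to `Sym(n)`, i.e. the orthogonal complement
of `ker L ∩ Sym(n)` inside `Sym(n)`. -/
def rangeLstar : Set (Matrix (Fin n) (Fin n) ℝ) :=
  {Q | Q.IsSymm ∧ ∀ Y : Matrix (Fin n) (Fin n) ℝ, Y.IsSymm → S.L Y = 0 → ip Q Y = 0}

/-- `lift := K̂* + range(L*)`. -/
def lift : Set (Matrix (Fin n) (Fin n) ℝ) :=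
  {X | ∃ P ∈ dualSet S.Khat, ∃ Q ∈ S.rangeLstar, X = P + Q}

/-- `K* := {X ∈ ker L : ⟨X,Y⟩ ≥ 0 for all Y ∈ K}` (within `Sym(n)`). -/
def Kstar : Set (Matrix (Fin n) (Fin n) ℝ) :=
  {X | X.IsSymm ∧ S.L X = 0 ∧ ∀ Y ∈ S.K, 0 ≤ ip X Y}

/-- The convex cone generated by `CUT^A = conv{s_U s_Uᵀ : U ∈ F(A)}`. -/
def coneCUT : Set (Matrix (Fin n) (Fin n) ℝ) :=
  {X | ∃ y : Finset (Fin n) → ℝ, (∀ U, 0 ≤ y U) ∧ (∀ U, U ∉ S.FA → y U = 0) ∧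
    X = ∑ U : Finset (Fin n), y U • stensor U}

/-- The conic assumptions: `A ⊆ PSD(n)`, `K ⊆ A*`, `cone(CUT^A)` has nonempty interior in
`Sym(n)`, and `K̂` has a nonzero Slater point in `ker L` (interior taken in `Sym(n)`). -/
structure Assumptions : Prop where
  A_psd : ∀ X ∈ S.A, X.PosSemidef
  K_sub_Astar : S.K ⊆ dualSet S.A
  cut_interior : (interior {X : {M : Matrix (Fin n) (Fin n) ℝ // M.IsSymm} |
      (X : Matrix (Fin n) (Fin n) ℝ) ∈ S.coneCUT}).Nonempty
  Khat_slater : ∃ X : {M : Matrix (Fin n) (Fin n) ℝ // M.IsSymm},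
      (X : Matrix (Fin n) (Fin n) ℝ) ≠ 0 ∧
      X ∈ interior {M : {M : Matrix (Fin n) (Fin n) ℝ // M.IsSymm} |
        (M : Matrix (Fin n) (Fin n) ℝ) ∈ S.Khat} ∧
      S.L X = 0

/-- `maxq(W) := max{s_Uᵀ W s_U : U ∈ F(A)}`. -/
def maxq (W : Matrix (Fin n) (Fin n) ℝ) : ℝ :=
  sSup {r | ∃ U ∈ S.FA, r = qform W (sgn U)}

/-- `ν(W) := max{⟨W,Y⟩ : Y ∈ A, diag(Y) = 1}`. -/
def nu (W : Matrix (Fin n) (Fin n) ℝ) : ℝ :=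
  sSup {r | ∃ Y ∈ S.A, (∀ i, Y i i = 1) ∧ r = ip W Y}

/-- `y ∈ ℝ₊^{F(A)}` is a tensor sign cover for `Z`:
`∑_{U ∈ F(A)} y_U s_U s_Uᵀ ⪰_lift Z`. -/
def CoverFeas (Z : Matrix (Fin n) (Fin n) ℝ) (y : Finset (Fin n) → ℝ) : Prop :=
  (∀ U, 0 ≤ y U) ∧ (∀ U, U ∉ S.FA → y U = 0) ∧
  (∑ U : Finset (Fin n), y U • stensor U) - Z ∈ S.lift

/-- `fevc(Z)`: minimum total weight of a tensor sign cover of `Z`. -/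
def fevc (Z : Matrix (Fin n) (Fin n) ℝ) : ℝ :=
  sInf {r | ∃ y, S.CoverFeas Z y ∧ r = ∑ U : Finset (Fin n), y U}

/-- `ν°(Z) := inf{μ ≥ 0 : ∃ Y ∈ A, diag(Y) = μ·1, Y ⪰_lift Z}`. -/
def nuPolar (Z : Matrix (Fin n) (Fin n) ℝ) : ℝ :=
  sInf {μ | 0 ≤ μ ∧ ∃ Y ∈ S.A, (∀ i, Y i i = μ) ∧ Y - Z ∈ S.lift}

end ConicSetting


section SandwichHelpers

variable {n k : ℕ}

lemma ip_add_left (X X' Y : Matrix (Fin n) (Fin n) ℝ) :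
    ip (X + X') Y = ip X Y + ip X' Y := by
  simp [ip, add_mul, Matrix.trace_add]

lemma ip_smul_left (c : ℝ) (X Y : Matrix (Fin n) (Fin n) ℝ) :
    ip (c • X) Y = c * ip X Y := by
  simp [ip, smul_mul_assoc, Matrix.trace_smul]

lemma lift_add (S : ConicSetting n k) {X X' : Matrix (Fin n) (Fin n) ℝ}
    (h : X ∈ S.lift) (h' : X' ∈ S.lift) : X + X' ∈ S.lift := by
  obtain ⟨P, ⟨hPs, hP⟩, Q, ⟨hQs, hQ⟩, rfl⟩ := h
  obtain ⟨P', ⟨hPs', hP'⟩, Q', ⟨hQs', hQ'⟩, rfl⟩ := h'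
  refine ⟨P + P', ⟨hPs.add hPs', fun Y hY => ?_⟩,
    Q + Q', ⟨hQs.add hQs', fun Y hYs hYL => ?_⟩, by abel⟩
  · rw [ip_add_left]; exact add_nonneg (hP Y hY) (hP' Y hY)
  · rw [ip_add_left, hQ Y hYs hYL, hQ' Y hYs hYL, add_zero]

lemma lift_smul (S : ConicSetting n k) {c : ℝ} (hc : 0 ≤ c) {X : Matrix (Fin n) (Fin n) ℝ}
    (h : X ∈ S.lift) : c • X ∈ S.lift := by
  obtain ⟨P, ⟨hPs, hP⟩, Q, ⟨hQs, hQ⟩, rfl⟩ := h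
  refine ⟨c • P, ⟨hPs.smul c, fun Y hY => ?_⟩,
    c • Q, ⟨hQs.smul c, fun Y hYs hYL => ?_⟩, by rw [smul_add]⟩
  · rw [ip_smul_left]; exact mul_nonneg hc (hP Y hY)
  · rw [ip_smul_left, hQ Y hYs hYL, mul_zero]

lemma stensor_diag (U : Finset (Fin n)) (i : Fin n) : stensor U i i = 1 := by
  unfold stensor sgn; split <;> norm_num

lemma psd_diag_zero {Y : Matrix (Fin n) (Fin n) ℝ} (hY : Y.PosSemidef)
    (hd : ∀ i, Y i i = 0) : Y = 0 := by
  obtain ⟨B, rfl⟩ : ∃ B : Matrix (Fin n) (Fin n) ℝ, Y = Bᴴ * B := by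
    open scoped MatrixOrder in
    exact CStarAlgebra.nonneg_iff_eq_star_mul_self.mp hY.nonneg
  have hB : B = 0 := by
    ext j i
    have h := hd i
    have hrw : (Bᴴ * B) i i = ∑ l, B l i ^ 2 := by
      simp [Matrix.mul_apply, Matrix.conjTranspose_apply, pow_two, mul_comm]
    rw [hrw] at h
    have h2 := (Finset.sum_eq_zero_iff_of_nonneg
      (fun l _ => sq_nonneg (B l i))).1 h j (Finset.mem_univ j)
    have := pow_eq_zero_iff (n := 2) (by norm_num) |>.1 h2
    simpa using this
  simp [hB]

lemma FA_nonempty (hn : 1 ≤ n) (S : ConicSetting n k) (hS : S.Assumptions) :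
    ∃ U, U ∈ S.FA := by
  by_contra hFA
  push_neg at hFA
  obtain ⟨x, hx⟩ := hS.cut_interior
  have hcone : ∀ X ∈ S.coneCUT, X = (0 : Matrix (Fin n) (Fin n) ℝ) := by
    rintro X ⟨y, hy0, hyF, rfl⟩
    have hz : ∀ U : Finset (Fin n), y U = 0 := fun U => hyF U (hFA U)
    simp [hz]
  set T : Set {M : Matrix (Fin n) (Fin n) ℝ // M.IsSymm} :=
    {X | (X : Matrix (Fin n) (Fin n) ℝ) ∈ S.coneCUT} with hT
  have hxT : x ∈ T := interior_subset hx
  have hx0 : (x : Matrix (Fin n) (Fin n) ℝ) = 0 := hcone _ hxT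
  set f : ℝ → {M : Matrix (Fin n) (Fin n) ℝ // M.IsSymm} :=
    fun t => ⟨(x : Matrix (Fin n) (Fin n) ℝ) + t • (1 : Matrix (Fin n) (Fin n) ℝ),
      x.2.add (Matrix.isSymm_one.smul t)⟩ with hf
  have hfc : Continuous f := by
    refine Continuous.subtype_mk ?_ _
    exact continuous_const.add (continuous_id.smul continuous_const)
  have hf0 : f 0 = x := Subtype.ext (by simp [hf])
  have hopen : IsOpen (f ⁻¹' interior T) := isOpen_interior.preimage hfc
  have h0mem : (0 : ℝ) ∈ f ⁻¹' interior T := by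
    simp only [Set.mem_preimage, hf0]; exact hx
  obtain ⟨ε, hε, hball⟩ := Metric.isOpen_iff.1 hopen 0 h0mem
  have htmem : (ε / 2) ∈ f ⁻¹' interior T := by
    apply hball
    simp only [Metric.mem_ball, Real.dist_eq, sub_zero]
    rw [abs_of_nonneg (by linarith)]
    linarith
  have hT2 : f (ε / 2) ∈ T := interior_subset htmem
  have heq : (x : Matrix (Fin n) (Fin n) ℝ) + (ε / 2) • (1 : Matrix (Fin n) (Fin n) ℝ) = 0 :=
    hcone _ hT2
  rw [hx0, zero_add] at heq
  have i0 : Fin n := ⟨0, hn⟩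
  have := congrFun (congrFun heq i0) i0
  simp only [Matrix.smul_apply, Matrix.one_apply_eq, smul_eq_mul, mul_one,
    Matrix.zero_apply] at this
  linarith

end SandwichHelpers

/-- dual rounding sandwich: under the conic assumptions, if `α > 0`
is such that every `Y ∈ A` with unit diagonal admits a probability vector
`p ∈ ℝ₊^{F(A)}` with `∑_U p_U s_U s_Uᵀ − αY ∈ lift`, then
`ν°(Z) ≤ fevc(Z) ≤ (1/α)·ν°(Z)` for every `Z ∈ K*`. -/
theorem dual_rounding_sandwich {n k : ℕ} (hn : 1 ≤ n) (S : ConicSetting n k)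
    (hS : S.Assumptions) (α : ℝ) (hα : 0 < α)
    (hround : ∀ Y ∈ S.A, (∀ i, Y i i = 1) →
      ∃ p : Finset (Fin n) → ℝ, (∀ U, 0 ≤ p U) ∧ (∀ U, U ∉ S.FA → p U = 0) ∧
        (∑ U : Finset (Fin n), p U) = 1 ∧
        (∑ U : Finset (Fin n), p U • stensor U) - α • Y ∈ S.lift) :
    ∀ Z ∈ S.Kstar, S.nuPolar Z ≤ S.fevc Z ∧ S.fevc Z ≤ (1 / α) * S.nuPolar Z := by
  intro Z hZ
  obtain ⟨U₀, hU₀⟩ := FA_nonempty hn S hS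
  have h0A : (0 : Matrix (Fin n) (Fin n) ℝ) ∈ S.A := by
    simpa using S.A_smul 0 le_rfl _ hU₀
  set Fset : Set ℝ := {r | ∃ y, S.CoverFeas Z y ∧ r = ∑ U : Finset (Fin n), y U} with hFsetdef
  set Nset : Set ℝ := {μ | 0 ≤ μ ∧ ∃ Y ∈ S.A, (∀ i, Y i i = μ) ∧ Y - Z ∈ S.lift} with hNsetdef
  have hfe : S.fevc Z = sInf Fset := rfl
  have hnu : S.nuPolar Z = sInf Nset := rfl
  have hFN : Fset ⊆ Nset := by
    rintro r ⟨y, ⟨hy0, hyF, hylift⟩, rfl⟩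
    refine ⟨Finset.sum_nonneg fun U _ => hy0 U,
      ∑ U : Finset (Fin n), y U • stensor U, ?_, ?_, hylift⟩
    · refine Finset.sum_induction _ (· ∈ S.A) (fun a b ha hb => S.A_add a ha b hb) h0A ?_
      intro U _
      by_cases hU : U ∈ S.FA
      · exact S.A_smul _ (hy0 U) _ hU
      · rw [hyF U hU, zero_smul]; exact h0A
    · intro i
      rw [Matrix.sum_apply]
      simp [Matrix.smul_apply, stensor_diag]
  have hNF : ∀ μ ∈ Nset, μ / α ∈ Fset := by
    rintro μ ⟨hμ0, Y, hYA, hYd, hYlift⟩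
    rcases eq_or_lt_of_le hμ0 with hμ | hμ
    · have hY0 : Y = 0 := psd_diag_zero (hS.A_psd Y hYA) (fun i => by rw [hYd i, ← hμ])
      refine ⟨fun _ => 0, ⟨fun U => le_rfl, fun U _ => rfl, ?_⟩, by simp [← hμ]⟩
      rw [hY0] at hYlift
      simpa using hYlift
    · obtain ⟨p, hp0, hpF, hp1, hplift⟩ := hround (μ⁻¹ • Y)
        (S.A_smul μ⁻¹ (by positivity) Y hYA)
        (fun i => by simp [Matrix.smul_apply, hYd i, inv_mul_cancel₀ hμ.ne'])
      refine ⟨fun U => (μ / α) * p U,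
        ⟨fun U => mul_nonneg (by positivity) (hp0 U),
         fun U hU => by show μ / α * p U = 0; rw [hpF U hU, mul_zero], ?_⟩, ?_⟩
      · have h1 : (μ / α) • (α • (μ⁻¹ • Y)) = Y := by
          rw [smul_smul, smul_smul]
          have hc : μ / α * α * μ⁻¹ = 1 := by
            field_simp
          rw [hc, one_smul]
        have h2 : (μ / α) • (∑ U : Finset (Fin n), p U • stensor U)
            = ∑ U : Finset (Fin n), ((μ / α) * p U) • stensor U := by
          rw [Finset.smul_sum]; simp_rw [smul_smul]
        have key : (∑ U : Finset (Fin n), ((μ / α) * p U) • stensor U) - Z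
            = (μ / α) • ((∑ U : Finset (Fin n), p U • stensor U) - α • (μ⁻¹ • Y))
              + (Y - Z) := by
          rw [smul_sub, h1, h2]; abel
        rw [key]
        exact lift_add S (lift_smul S (by positivity) hplift) hYlift
      · rw [← Finset.mul_sum, hp1, mul_one]
  have hF_bdd : BddBelow Fset := by
    refine ⟨0, ?_⟩
    rintro r ⟨y, ⟨hy0, _, _⟩, rfl⟩
    exact Finset.sum_nonneg fun U _ => hy0 U
  have hN_bdd : BddBelow Nset := ⟨0, fun μ hμ => hμ.1⟩
  by_cases hNe : Nset.Nonempty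
  · have hFe : Fset.Nonempty := by
      obtain ⟨μ, hμ⟩ := hNe
      exact ⟨μ / α, hNF μ hμ⟩
    constructor
    · rw [hfe, hnu]
      exact csInf_le_csInf hN_bdd hFe hFN
    · have h1 : α * S.fevc Z ≤ sInf Nset := by
        apply le_csInf hNe
        intro μ hμ
        have hle : S.fevc Z ≤ μ / α := by
          rw [hfe]; exact csInf_le hF_bdd (hNF μ hμ)
        calc α * S.fevc Z ≤ α * (μ / α) :=
              mul_le_mul_of_nonneg_left hle hα.le
          _ = μ := by field_simp
      rw [hnu, one_div, inv_mul_eq_div]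
      exact (le_div_iff₀ hα).2 (by linarith)
  · have hFe : ¬ Fset.Nonempty := fun ⟨r, hr⟩ => hNe ⟨r, hFN hr⟩
    rw [Set.not_nonempty_iff_eq_empty] at hNe hFe
    rw [hfe, hnu, hNe, hFe, Real.sInf_empty]
    norm_num
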